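/- Under the hypotheses of the non-zero Lie bracket lemma (L₁(w) = (1/n)∑ᵢ L_S(θᵢ) with F = −gradient L₁; L₂ twice continuously differentiable with G = −gradient L₂ and ∇_{θᵢ} L₂ = ∇_{θᵢ} L₁ everywhere for each block i), if θ satisfies gradient L_S θ = 0, then the Lie bracket [F, G] = (fderiv ℝ G ·)(F(·)) − (fderiv ℝ F ·)(G(·)) vanishes at the diagonal point (θ, …, θ, 0). -/

import Mathlib

noncomputable section

abbrev Wsp (d_s m n : ℕ) := EuclideanSpace ℝ ((Fin n × Fin d_s) ⊕ Fin m)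

/-- The `i`-th parameter block `θᵢ` of a point `w = (θ₁,…,θₙ,η)`. -/
def blk {d_s m n : ℕ} (w : Wsp d_s m n) (i : Fin n) : EuclideanSpace ℝ (Fin d_s) :=
  WithLp.toLp 2 (fun a => w (Sum.inl (i, a)) : Fin d_s → ℝ)

/-- Replace the `i`-th block of `w` by `θ'`, keeping all other components. -/
def updBlk {d_s m n : ℕ} (w : Wsp d_s m n) (i : Fin n)
    (θ' : EuclideanSpace ℝ (Fin d_s)) : Wsp d_s m n :=
  WithLp.toLp 2 (fun z => Sum.elim (fun p : Fin n × Fin d_s => if p.1 = i then θ' p.2 else w (Sum.inl p))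
    (fun b => w (Sum.inr b)) z : ((Fin n × Fin d_s) ⊕ Fin m) → ℝ)

/-- The diagonal point `(θ,…,θ,0)`. -/
def diagPt {d_s m n : ℕ} (θ : EuclideanSpace ℝ (Fin d_s)) : Wsp d_s m n :=
  WithLp.toLp 2 (fun z => Sum.elim (fun p : Fin n × Fin d_s => θ p.2) (fun _ => (0 : ℝ)) z :
    ((Fin n × Fin d_s) ⊕ Fin m) → ℝ)

-- block extraction CLM
noncomputable def blkCLM (d_s m n : ℕ) (i : Fin n) :
    Wsp d_s m n →L[ℝ] EuclideanSpace ℝ (Fin d_s) :=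
  LinearMap.toContinuousLinearMap
  { toFun := fun w => blk w i
    map_add' := fun x y => by
      ext a; simp [blk, PiLp.add_apply]
    map_smul' := fun c x => by
      ext a; simp [blk, PiLp.smul_apply] }

@[simp] lemma blkCLM_apply {d_s m n : ℕ} (i : Fin n) (w : Wsp d_s m n) :
    blkCLM d_s m n i w = blk w i := rfl

-- insertion CLM into block i
noncomputable def insCLM (d_s m n : ℕ) (i : Fin n) :
    EuclideanSpace ℝ (Fin d_s) →L[ℝ] Wsp d_s m n :=
  LinearMap.toContinuousLinearMap
  { toFun := fun θ' => WithLp.toLp 2 (fun z => Sum.elim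
      (fun p : Fin n × Fin d_s => if p.1 = i then θ' p.2 else 0)
      (fun _ => (0:ℝ)) z : ((Fin n × Fin d_s) ⊕ Fin m) → ℝ)
    map_add' := fun x y => by
      ext z; cases z <;> simp [PiLp.add_apply] <;> split <;> simp
    map_smul' := fun c x => by
      ext z; cases z <;> simp [PiLp.smul_apply] <;> split <;> simp }

-- projection killing the η components
noncomputable def projCLM (d_s m n : ℕ) :
    Wsp d_s m n →L[ℝ] Wsp d_s m n :=
  LinearMap.toContinuousLinearMap
  { toFun := fun w => WithLp.toLp 2 (fun z => Sum.elim
      (fun p : Fin n × Fin d_s => w (Sum.inl p)) (fun _ => (0:ℝ)) z :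
      ((Fin n × Fin d_s) ⊕ Fin m) → ℝ)
    map_add' := fun x y => by
      ext z; cases z <;> simp [PiLp.add_apply]
    map_smul' := fun c x => by
      ext z; cases z <;> simp [PiLp.smul_apply] }

lemma blk_proj {d_s m n : ℕ} (w : Wsp d_s m n) (i : Fin n) :
    blk (projCLM d_s m n w) i = blk w i := rfl

lemma proj_idem {d_s m n : ℕ} (w : Wsp d_s m n) :
    projCLM d_s m n (projCLM d_s m n w) = projCLM d_s m n w := by
  ext z; cases z <;> rfl

lemma proj_diag {d_s m n : ℕ} (θ : EuclideanSpace ℝ (Fin d_s)) :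
    projCLM d_s m n (diagPt θ) = diagPt θ := by
  ext z; cases z <;> rfl

lemma updBlk_eq {d_s m n : ℕ} (w : Wsp d_s m n) (i : Fin n)
    (θ' : EuclideanSpace ℝ (Fin d_s)) :
    updBlk w i θ' = updBlk w i 0 + insCLM d_s m n i θ' := by
  ext z
  cases z with
  | inl p =>
    show _ = updBlk w i 0 (Sum.inl p) + _
    simp only [updBlk, insCLM, LinearMap.coe_toContinuousLinearMap', LinearMap.coe_mk,
      AddHom.coe_mk, Sum.elim_inl]
    split <;> simp_all [PiLp.zero_apply]
  | inr b =>
    show _ = updBlk w i 0 (Sum.inr b) + _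
    simp [updBlk, insCLM]

lemma updBlk_self {d_s m n : ℕ} (w : Wsp d_s m n) (i : Fin n) :
    updBlk w i (blk w i) = w := by
  ext z
  cases z with
  | inl p =>
    show (if p.1 = i then blk w i p.2 else w (Sum.inl p)) = w (Sum.inl p)
    rcases p with ⟨j,a⟩
    by_cases h : j = i
    · subst h; simp [blk]
    · simp [h]
  | inr b => rfl

lemma symm_toDual_apply {ι : Type*} [Fintype ι] [DecidableEq ι]
    (D : EuclideanSpace ℝ ι →L[ℝ] ℝ) (z : ι) :
    ((InnerProductSpace.toDual ℝ (EuclideanSpace ℝ ι)).symm D) z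
      = D (EuclideanSpace.single z 1) := by
  set x := (InnerProductSpace.toDual ℝ (EuclideanSpace ℝ ι)).symm D with hx
  have h : D = InnerProductSpace.toDual ℝ _ x := by
    rw [hx, LinearIsometryEquiv.apply_symm_apply]
  rw [h, InnerProductSpace.toDual_apply_apply, EuclideanSpace.inner_single_right]
  simp

lemma ins_single {d_s m n : ℕ} (i : Fin n) (a : Fin d_s) :
    insCLM d_s m n i (EuclideanSpace.single a (1:ℝ))
      = EuclideanSpace.single (Sum.inl (i,a) : (Fin n × Fin d_s) ⊕ Fin m) 1 := by
  ext z
  cases z with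
  | inl p =>
    rcases p with ⟨j,b⟩
    show (if j = i then EuclideanSpace.single a (1:ℝ) b else 0) = _
    rw [EuclideanSpace.single_apply, EuclideanSpace.single_apply]
    by_cases hj : j = i
    · subst hj
      by_cases hb : b = a <;> simp [hb]
    · simp [hj, Sum.inl.injEq, Prod.ext_iff]
  | inr b =>
    show (0:ℝ) = _
    rw [EuclideanSpace.single_apply]
    simp

theorem stmt_16 (d_s m n : ℕ) (hn : 1 ≤ n)
    (L_S : EuclideanSpace ℝ (Fin d_s) → ℝ) (hLS : ContDiff ℝ 2 L_S)
    (L₁ : Wsp d_s m n → ℝ)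
    (hL₁ : L₁ = fun w => (1 / (n : ℝ)) * ∑ i : Fin n, L_S (blk w i))
    (L₂ : Wsp d_s m n → ℝ) (hL₂ : ContDiff ℝ 2 L₂)
    (F G : Wsp d_s m n → Wsp d_s m n)
    (hF : F = fun w => -gradient L₁ w) (hG : G = fun w => -gradient L₂ w)
    (hpart : ∀ (w : Wsp d_s m n) (i : Fin n),
      gradient (fun θ' => L₂ (updBlk w i θ')) (blk w i)
        = gradient (fun θ' => L₁ (updBlk w i θ')) (blk w i))
    (θ : EuclideanSpace ℝ (Fin d_s)) (hθ : gradient L_S θ = 0) :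
    fderiv ℝ G (diagPt θ) (F (diagPt θ))
      - fderiv ℝ F (diagPt θ) (G (diagPt θ)) = 0 := by
  classical
  have hLSd : Differentiable ℝ L_S := hLS.differentiable (by norm_num)
  -- L₁ is C²
  have hL₁C2 : ContDiff ℝ 2 L₁ := by
    rw [hL₁]
    exact contDiff_const.mul (ContDiff.sum fun i _ =>
      hLS.comp (blkCLM d_s m n i).contDiff)
  have hL₁diff : Differentiable ℝ L₁ := hL₁C2.differentiable (by norm_num)
  have hL₂diff : Differentiable ℝ L₂ := hL₂.differentiable (by norm_num)
  -- fderiv of L_S at θ vanishes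
  have hLSf : fderiv ℝ L_S θ = 0 := by
    unfold gradient at hθ
    rwa [LinearIsometryEquiv.map_eq_zero_iff] at hθ
  -- derivative of L₁
  have key : ∀ w : Wsp d_s m n, HasFDerivAt L₁
      ((1/(n:ℝ)) • ∑ i : Fin n, (fderiv ℝ L_S (blk w i)).comp (blkCLM d_s m n i)) w := by
    intro w
    rw [hL₁]
    exact (HasFDerivAt.fun_sum fun i _ =>
      ((hLSd (blk w i)).hasFDerivAt.comp w (blkCLM d_s m n i).hasFDerivAt)).const_mul _
  have hfd1 : fderiv ℝ L₁ (diagPt θ) = 0 := by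
    have h := (key (diagPt θ)).fderiv
    have hb : ∀ i : Fin n, blk (diagPt θ : Wsp d_s m n) i = θ := fun i => rfl
    rw [h]
    simp [hb, hLSf]
  -- F vanishes at the diagonal point
  have hFd0 : F (diagPt θ) = 0 := by
    rw [hF]
    show -gradient L₁ (diagPt θ) = 0
    unfold gradient
    rw [hfd1]
    simp
  -- partial fderivs
  have hpartial : ∀ (f : Wsp d_s m n → ℝ), Differentiable ℝ f → ∀ (w : Wsp d_s m n) (i : Fin n),
      fderiv ℝ (fun θ' => f (updBlk w i θ')) (blk w i)
        = (fderiv ℝ f w).comp (insCLM d_s m n i) := by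
    intro f hf w i
    have haff : HasFDerivAt (fun θ' => updBlk w i θ') (insCLM d_s m n i) (blk w i) := by
      have h : (fun θ' => updBlk w i θ') = fun θ' => updBlk w i 0 + insCLM d_s m n i θ' :=
        funext (updBlk_eq w i)
      rw [h]
      exact (insCLM d_s m n i).hasFDerivAt.const_add _
    have hfw : HasFDerivAt f (fderiv ℝ f w) (updBlk w i (blk w i)) := by
      rw [updBlk_self]; exact (hf w).hasFDerivAt
    exact (hfw.comp (blk w i) haff).fderiv
  -- θ-components of fderiv L₂ at diag vanish
  have hins : ∀ (i : Fin n) (v : EuclideanSpace ℝ (Fin d_s)),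
      fderiv ℝ L₂ (diagPt θ) (insCLM d_s m n i v) = 0 := by
    intro i v
    have h := hpart (diagPt θ) i
    unfold gradient at h
    have h' := (InnerProductSpace.toDual ℝ (EuclideanSpace ℝ (Fin d_s))).symm.injective h
    rw [hpartial L₂ hL₂diff (diagPt θ) i, hpartial L₁ hL₁diff (diagPt θ) i] at h'
    have := congrArg (fun (D : EuclideanSpace ℝ (Fin d_s) →L[ℝ] ℝ) => D v) h'
    simp only [ContinuousLinearMap.comp_apply] at this
    rw [this, hfd1]
    rfl
  -- θ-block of G at diag vanishes
  have hPG : projCLM d_s m n (G (diagPt θ)) = 0 := by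
    rw [hG]
    ext z
    cases z with
    | inl p =>
      rcases p with ⟨i,a⟩
      show -(gradient L₂ (diagPt θ)) (Sum.inl (i,a)) = 0
      unfold gradient
      rw [symm_toDual_apply, ← ins_single (m := m) i a, hins]
      simp
    | inr b => rfl
  -- L₁ factors through P
  have hL1P : L₁ = L₁ ∘ (projCLM d_s m n) := by
    rw [hL₁]; funext w; rfl
  have hfeq : ∀ w : Wsp d_s m n, fderiv ℝ L₁ w = fderiv ℝ L₁ (projCLM d_s m n w) := by
    intro w
    have h1 : fderiv ℝ L₁ w = (fderiv ℝ L₁ (projCLM d_s m n w)).comp (projCLM d_s m n) := by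
      conv_lhs => rw [hL1P]
      rw [fderiv_comp w (hL₁diff _) (projCLM d_s m n).differentiableAt, (projCLM d_s m n).fderiv]
    have h2 : fderiv ℝ L₁ (projCLM d_s m n w) = (fderiv ℝ L₁ (projCLM d_s m n w)).comp (projCLM d_s m n) := by
      conv_lhs => rw [hL1P]
      rw [fderiv_comp _ (hL₁diff _) (projCLM d_s m n).differentiableAt, (projCLM d_s m n).fderiv, proj_idem]
    rw [h1, ← h2]
  -- F factors through P
  have hFP : F = F ∘ (projCLM d_s m n) := by
    funext w
    rw [hF]
    show -gradient L₁ w = -gradient L₁ (projCLM d_s m n w)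
    unfold gradient
    rw [hfeq w]
  -- F is differentiable
  have hFdiff : Differentiable ℝ F := by
    rw [hF]
    have h1 : ContDiff ℝ 1 (fderiv ℝ L₁) := hL₁C2.fderiv_right (by norm_num)
    have h2 : Differentiable ℝ (fderiv ℝ L₁) := h1.differentiable one_ne_zero
    have h3 : Differentiable ℝ (fun w => gradient L₁ w) := by
      unfold gradient
      exact (InnerProductSpace.toDual ℝ
        (Wsp d_s m n)).symm.toContinuousLinearEquiv.differentiable.comp h2
    exact h3.neg
  -- second term vanishes
  have hsecond : fderiv ℝ F (diagPt θ) (G (diagPt θ)) = 0 := by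
    have h1 : fderiv ℝ F (diagPt θ)
        = (fderiv ℝ F (diagPt θ)).comp (projCLM d_s m n) := by
      conv_lhs => rw [hFP]
      rw [fderiv_comp _ (hFdiff _) (projCLM d_s m n).differentiableAt, (projCLM d_s m n).fderiv, proj_diag]
    rw [h1]
    simp only [ContinuousLinearMap.comp_apply]
    rw [hPG]
    simp
  rw [hFd0, hsecond]
  simp
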